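/- Let K be a compact subset of ℝ of infinite cardinality. Let m_n(K) denote the infimum of ‖P‖_K over monic real polynomials P of degree n, and let δ_n(K) = sup over x_1,…,x_n ∈ K of ∏_{1 ≤ i ≠ j ≤ n} |x_i − x_j|^{1/(n(n−1))}. Then lim_{n→∞} m_n(K)^{1/n} = lim_{n→∞} δ_n(K); this common value is denoted cap(K), the logarithmic capacity (transfinite diameter) of K. -/

import Mathlib

open Polynomial Filter Finset

/-- The sup norm of a real polynomial on a set `K ⊆ ℝ`. -/
noncomputable def supNormOn (K : Set ℝ) (P : Polynomial ℝ) : ℝ :=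
  sSup ((fun x => |P.eval x|) '' K)

/-- `m_n(K)`: the infimum of sup norms on `K` of monic real polynomials of degree `n`. -/
noncomputable def chebInf (K : Set ℝ) (n : ℕ) : ℝ :=
  sInf (supNormOn K '' {P : Polynomial ℝ | P.Monic ∧ P.natDegree = n})

/-- The `n`-th diameter `δ_n(K)` of a set `K ⊆ ℝ`. -/
noncomputable def deltaN (K : Set ℝ) (n : ℕ) : ℝ :=
  sSup {r : ℝ | ∃ x : Fin n → ℝ, (∀ i, x i ∈ K) ∧
    r = (∏ p ∈ Finset.univ.offDiag, |x p.1 - x p.2|) ^ (((n : ℝ) * ((n : ℝ) - 1))⁻¹)}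

section basics
variable {K : Set ℝ}

lemma bddAbove_image (hK : IsCompact K) (P : Polynomial ℝ) :
    BddAbove ((fun x => |P.eval x|) '' K) :=
  hK.bddAbove_image ((continuous_abs.comp P.continuous).continuousOn)

lemma le_supNormOn (hK : IsCompact K) (P : Polynomial ℝ) {x : ℝ} (hx : x ∈ K) :
    |P.eval x| ≤ supNormOn K P :=
  le_csSup (bddAbove_image hK P) ⟨x, hx, rfl⟩

lemma supNormOn_nonneg (hK : IsCompact K) (hKne : K.Nonempty) (P : Polynomial ℝ) :
    0 ≤ supNormOn K P := by
  obtain ⟨x, hx⟩ := hKne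
  exact le_trans (abs_nonneg _) (le_supNormOn hK P hx)

lemma supNormOn_le (hKne : K.Nonempty) {P : Polynomial ℝ} {B : ℝ}
    (h : ∀ x ∈ K, |P.eval x| ≤ B) : supNormOn K P ≤ B := by
  apply csSup_le (hKne.image _)
  rintro r ⟨x, hx, rfl⟩; exact h x hx

lemma supNormOn_pos (hK : IsCompact K) (hKinf : K.Infinite) {P : Polynomial ℝ} (hP : P ≠ 0) :
    0 < supNormOn K P := by
  have : ∃ x ∈ K, P.eval x ≠ 0 := by
    by_contra h
    push_neg at h
    exact hP (P.eq_zero_of_infinite_isRoot (hKinf.mono (fun x hx => h x hx)))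
  obtain ⟨x, hx, hne⟩ := this
  exact lt_of_lt_of_le (abs_pos.2 hne) (le_supNormOn hK P hx)

lemma chebInf_nonneg (hK : IsCompact K) (hKne : K.Nonempty) (n : ℕ) : 0 ≤ chebInf K n := by
  apply le_csInf
  · exact ⟨supNormOn K (X ^ n), ⟨X ^ n, ⟨monic_X_pow n, natDegree_X_pow n⟩, rfl⟩⟩
  · rintro r ⟨P, _, rfl⟩; exact supNormOn_nonneg hK hKne P

lemma chebInf_le (hK : IsCompact K) (hKne : K.Nonempty) {n : ℕ} {P : Polynomial ℝ}
    (h1 : P.Monic) (h2 : P.natDegree = n) : chebInf K n ≤ supNormOn K P := by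
  apply csInf_le
  · exact ⟨0, by rintro r ⟨Q, ⟨_, _⟩, rfl⟩; exact supNormOn_nonneg hK hKne Q⟩
  · exact ⟨P, ⟨h1, h2⟩, rfl⟩

lemma exists_monic_lt {n : ℕ} {b : ℝ} (h : chebInf K n < b) :
    ∃ P : Polynomial ℝ, P.Monic ∧ P.natDegree = n ∧ supNormOn K P < b := by
  have hne : (supNormOn K '' {P : Polynomial ℝ | P.Monic ∧ P.natDegree = n}).Nonempty :=
    ⟨supNormOn K (X ^ n), ⟨X ^ n, ⟨monic_X_pow n, natDegree_X_pow n⟩, rfl⟩⟩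
  obtain ⟨r, ⟨P, ⟨hm, hd⟩, rfl⟩, hr⟩ := exists_lt_of_csInf_lt hne h
  exact ⟨P, hm, hd, hr⟩

end basics

noncomputable def Fprod (n : ℕ) (x : Fin n → ℝ) : ℝ :=
  ∏ p ∈ Finset.univ.offDiag, |x p.1 - x p.2|

noncomputable def capExp (n : ℕ) : ℝ := ((n : ℝ) * ((n : ℝ) - 1))⁻¹

lemma capExp_nonneg (n : ℕ) : 0 ≤ capExp n := by
  rcases Nat.eq_zero_or_pos n with h | h
  · simp [capExp, h]
  · have : (1 : ℝ) ≤ (n : ℝ) := by exact_mod_cast h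
    apply inv_nonneg.2
    apply mul_nonneg (by positivity) (by linarith)

lemma Fprod_nonneg (n : ℕ) (x : Fin n → ℝ) : 0 ≤ Fprod n x :=
  Finset.prod_nonneg fun _ _ => abs_nonneg _

lemma Fprod_continuous (n : ℕ) : Continuous (Fprod n) := by
  apply continuous_finset_prod
  exact fun p _ => ((continuous_apply p.1).sub (continuous_apply p.2)).abs

lemma Fprod_pos_of_injective (n : ℕ) {x : Fin n → ℝ} (hx : Function.Injective x) :
    0 < Fprod n x := by
  apply Finset.prod_pos
  rintro ⟨a, b⟩ hp
  rw [Finset.mem_offDiag] at hp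
  exact abs_pos.2 (sub_ne_zero.2 fun h => hp.2.2 (hx h))

lemma exists_injective_tuple {K : Set ℝ} (hKinf : K.Infinite) (n : ℕ) :
    ∃ x : Fin n → ℝ, (∀ i, x i ∈ K) ∧ Function.Injective x := by
  obtain ⟨t, hts, hcard⟩ := hKinf.exists_subset_card_eq n
  let e := t.equivFinOfCardEq hcard
  refine ⟨fun i => (e.symm i : ℝ), fun i => hts (e.symm i).2, ?_⟩
  intro a b h
  have := Subtype.coe_injective h
  simpa using congrArg e (this)

lemma deltaN_set_eq (K : Set ℝ) (n : ℕ) :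
    {r : ℝ | ∃ x : Fin n → ℝ, (∀ i, x i ∈ K) ∧
      r = (∏ p ∈ Finset.univ.offDiag, |x p.1 - x p.2|) ^ (((n : ℝ) * ((n : ℝ) - 1))⁻¹)}
    = (fun x => Fprod n x ^ capExp n) '' {x : Fin n → ℝ | ∀ i, x i ∈ K} := by
  ext r
  simp only [Set.mem_setOf_eq, Set.mem_image, Fprod, capExp]
  constructor
  · rintro ⟨x, hx, rfl⟩; exact ⟨x, hx, rfl⟩
  · rintro ⟨x, hx, rfl⟩; exact ⟨x, hx, rfl⟩

lemma fekete_exists {K : Set ℝ} (hK : IsCompact K) (hKne : K.Nonempty) (n : ℕ) :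
    ∃ w : Fin n → ℝ, (∀ i, w i ∈ K) ∧
      (∀ x : Fin n → ℝ, (∀ i, x i ∈ K) → Fprod n x ≤ Fprod n w) ∧
      deltaN K n = Fprod n w ^ capExp n := by
  have hSeq : {x : Fin n → ℝ | ∀ i, x i ∈ K} = Set.univ.pi (fun _ : Fin n => K) := by
    ext x; simp [Set.mem_pi]
  have hScomp : IsCompact {x : Fin n → ℝ | ∀ i, x i ∈ K} := by
    rw [hSeq]; exact isCompact_univ_pi fun _ => hK
  obtain ⟨x0, hx0⟩ := hKne
  have hSne : {x : Fin n → ℝ | ∀ i, x i ∈ K}.Nonempty := ⟨fun _ => x0, fun _ => hx0⟩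
  obtain ⟨w, hwS, hmax⟩ := hScomp.exists_isMaxOn hSne (Fprod_continuous n).continuousOn
  refine ⟨w, hwS, fun x hx => hmax hx, ?_⟩
  rw [deltaN, deltaN_set_eq]
  apply IsGreatest.csSup_eq
  constructor
  · exact ⟨w, hwS, rfl⟩
  · rintro r ⟨x, hx, rfl⟩
    exact Real.rpow_le_rpow (Fprod_nonneg n x) (hmax hx) (capExp_nonneg n)

lemma deltaN_pos {K : Set ℝ} (hK : IsCompact K) (hKinf : K.Infinite) (n : ℕ) :
    0 < deltaN K n := by
  obtain ⟨w, hw, hmax, heq⟩ := fekete_exists hK hKinf.nonempty n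
  obtain ⟨x, hx, hinj⟩ := exists_injective_tuple hKinf n
  have : 0 < Fprod n w := lt_of_lt_of_le (Fprod_pos_of_injective n hinj) (hmax x hx)
  rw [heq]
  exact Real.rpow_pos_of_pos this _

lemma deltaN_le {K : Set ℝ} (hKne : K.Nonempty) {n : ℕ} {B : ℝ} (hB : 0 ≤ B)
    (h : ∀ x : Fin n → ℝ, (∀ i, x i ∈ K) → Fprod n x ≤ B) :
    deltaN K n ≤ B ^ capExp n := by
  rw [deltaN, deltaN_set_eq]
  apply csSup_le
  · obtain ⟨x0, hx0⟩ := hKne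
    exact ⟨_, ⟨fun _ => x0, fun _ => hx0, rfl⟩⟩
  · rintro r ⟨x, hx, rfl⟩
    exact Real.rpow_le_rpow (Fprod_nonneg n x) (h x hx) (capExp_nonneg n)

section comb
variable {m : ℕ}

lemma offDiag_prod_split (i : Fin m) (g : Fin m × Fin m → ℝ) :
    ∏ p ∈ (univ : Finset (Fin m)).offDiag, g p =
      ((∏ j ∈ univ.erase i, g (i, j)) * ∏ j ∈ univ.erase i, g (j, i)) *
        ∏ p ∈ (univ.erase i).offDiag, g p := by
  classical
  set s := (univ : Finset (Fin m)).offDiag with hs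
  have h1 : (∏ p ∈ s, g p) =
      (∏ p ∈ s.filter (fun p => p.1 = i), g p) * ∏ p ∈ s.filter (fun p => ¬p.1 = i), g p :=
    (prod_filter_mul_prod_filter_not s _ g).symm
  have h2 : (∏ p ∈ s.filter (fun p => ¬p.1 = i), g p) =
      (∏ p ∈ (s.filter (fun p => ¬p.1 = i)).filter (fun p => p.2 = i), g p) *
        ∏ p ∈ (s.filter (fun p => ¬p.1 = i)).filter (fun p => ¬p.2 = i), g p :=
    (prod_filter_mul_prod_filter_not _ _ g).symm
  have e1 : s.filter (fun p => p.1 = i) = (univ.erase i).image (fun j => (i, j)) := by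
    ext ⟨a, b⟩
    simp only [hs, mem_filter, mem_offDiag, mem_image, mem_erase, mem_univ, true_and,
      Prod.mk.injEq]
    aesop
  have e2 : (s.filter (fun p => ¬p.1 = i)).filter (fun p => p.2 = i)
      = (univ.erase i).image (fun j => (j, i)) := by
    ext ⟨a, b⟩
    simp only [hs, mem_filter, mem_offDiag, mem_image, mem_erase, mem_univ, true_and,
      Prod.mk.injEq]
    aesop
  have e3 : (s.filter (fun p => ¬p.1 = i)).filter (fun p => ¬p.2 = i)
      = (univ.erase i).offDiag := by
    ext ⟨a, b⟩
    simp only [hs, mem_filter, mem_offDiag, mem_erase, mem_univ, true_and, and_true]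
    tauto
  have hinj1 : ∀ a ∈ univ.erase i, ∀ b ∈ univ.erase i,
      (fun j => ((i, j) : Fin m × Fin m)) a = (fun j => (i, j)) b → a = b := by
    intro a _ b _ h; simpa using h
  have hinj2 : ∀ a ∈ univ.erase i, ∀ b ∈ univ.erase i,
      (fun j => ((j, i) : Fin m × Fin m)) a = (fun j => (j, i)) b → a = b := by
    intro a _ b _ h; simpa using h
  rw [h1, h2, e1, e2, e3, prod_image hinj1, prod_image hinj2, mul_assoc]

lemma offDiag_prod_eq_prod_prod (x : Fin m → ℝ) (g : ℝ → ℝ) :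
    ∏ p ∈ (univ : Finset (Fin m)).offDiag, g (x p.1 - x p.2)
      = ∏ i, ∏ j ∈ univ.erase i, g (x i - x j) := by
  classical
  have e : (univ : Finset (Fin m)).offDiag
      = (univ ×ˢ univ).filter (fun p => p.1 ≠ p.2) := by
    ext ⟨a, b⟩; simp [mem_offDiag]
  rw [e, prod_filter, prod_product]
  refine prod_congr rfl fun i _ => ?_
  rw [← prod_filter]
  congr 1
  ext j
  simp [mem_erase, ne_comm, eq_comm]

end comb
section ineqA
variable {K : Set ℝ}

lemma Fprod_update (m : ℕ) (w : Fin m → ℝ) (i : Fin m) (z : ℝ) :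
    Fprod m (Function.update w i z) =
      ((∏ j ∈ univ.erase i, |z - w j|) * ∏ j ∈ univ.erase i, |z - w j|) *
        ∏ p ∈ (univ.erase i).offDiag, |w p.1 - w p.2| := by
  rw [Fprod, offDiag_prod_split i]
  congr 1
  · congr 1
    · refine prod_congr rfl fun j hj => ?_
      rw [Function.update_self, Function.update_of_ne (ne_of_mem_erase hj)]
    · refine prod_congr rfl fun j hj => ?_
      rw [Function.update_self, Function.update_of_ne (ne_of_mem_erase hj), abs_sub_comm]
  · refine prod_congr rfl fun p hp => ?_
    rw [Finset.mem_offDiag] at hp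
    rw [Function.update_of_ne (ne_of_mem_erase hp.1), Function.update_of_ne (ne_of_mem_erase hp.2.1)]

lemma chebInf_le_deltaN_pow (hK : IsCompact K) (hKinf : K.Infinite) {n : ℕ} (hn : 1 ≤ n) :
    chebInf K n ≤ deltaN K (n + 1) ^ n := by
  have hKne : K.Nonempty := hKinf.nonempty
  set m := n + 1 with hm
  obtain ⟨w, hw, hmax, heq⟩ := fekete_exists hK hKne m
  obtain ⟨y, hy, hyinj⟩ := exists_injective_tuple hKinf m
  have hFw : 0 < Fprod m w := lt_of_lt_of_le (Fprod_pos_of_injective m hyinj) (hmax y hy)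
  have hδpos : 0 < deltaN K m := deltaN_pos hK hKinf m
  set a : Fin m → ℝ := fun i => ∏ j ∈ univ.erase i, |w i - w j| with ha
  have hprod_a : ∏ i, a i = Fprod m w := (offDiag_prod_eq_prod_prod w abs).symm
  have hexp : (deltaN K m ^ n) ^ m = Fprod m w := by
    rw [heq, ← Real.rpow_natCast (Fprod m w ^ capExp m) n, ← Real.rpow_natCast _ m,
      ← Real.rpow_mul (Fprod_nonneg m w), ← Real.rpow_mul (Fprod_nonneg m w)]
    rw [show capExp m * (n : ℝ) * (m : ℝ) = 1 by
      rw [capExp, hm]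
      push_cast
      have hn' : (1 : ℝ) ≤ (n : ℝ) := by exact_mod_cast hn
      have hn0' : (n : ℝ) ≠ 0 := by linarith
      simp only [add_sub_cancel_right]
      field_simp]
    exact Real.rpow_one _
  have key : ∃ i, a i ≤ deltaN K m ^ n := by
    by_contra h
    push_neg at h
    have h1 : ∏ _i : Fin m, deltaN K m ^ n < ∏ i, a i :=
      prod_lt_prod_of_nonempty (fun _ _ => pow_pos hδpos n) (fun i _ => h i) univ_nonempty
    rw [prod_const, card_univ, Fintype.card_fin, hprod_a, hexp] at h1
    exact lt_irrefl _ h1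
  obtain ⟨i, hi⟩ := key
  set p : Polynomial ℝ := ∏ j ∈ univ.erase i, (X - C (w j)) with hp
  have hmonic : p.Monic := monic_prod_of_monic _ _ fun j _ => monic_X_sub_C _
  have hdeg : p.natDegree = n := by
    rw [hp, natDegree_prod _ _ fun j _ => X_sub_C_ne_zero _]
    simp [card_erase_of_mem (mem_univ i), hm]
  have heval : ∀ z : ℝ, |p.eval z| = ∏ j ∈ univ.erase i, |z - w j| := by
    intro z
    rw [hp, eval_prod, abs_prod]
    exact prod_congr rfl fun j _ => by simp
  set R : ℝ := ∏ p ∈ (univ.erase i).offDiag, |w p.1 - w p.2| with hR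
  have hRnonneg : 0 ≤ R := prod_nonneg fun _ _ => abs_nonneg _
  set B : ℝ → ℝ := fun z => ∏ j ∈ univ.erase i, |z - w j| with hB
  have hBnonneg : ∀ z, 0 ≤ B z := fun z => prod_nonneg fun _ _ => abs_nonneg _
  have hFw_eq : Fprod m w = B (w i) * B (w i) * R := by
    conv_lhs => rw [← Function.update_eq_self i w]
    exact Fprod_update m w i (w i)
  have hRpos : 0 < R := by
    rcases hRnonneg.lt_or_eq with h | h
    · exact h
    · exfalso; rw [hFw_eq, ← h, mul_zero] at hFw; exact lt_irrefl _ hFw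
  have hBwi : B (w i) = a i := rfl
  have hBle : ∀ z ∈ K, B z ≤ B (w i) := by
    intro z hz
    have hmem : ∀ j, Function.update w i z j ∈ K := by
      intro j
      rcases eq_or_ne j i with rfl | hj
      · rw [Function.update_self]; exact hz
      · rw [Function.update_of_ne hj]; exact hw j
    have := hmax _ hmem
    rw [Fprod_update m w i z, hFw_eq] at this
    have h2 : B z * B z * R ≤ B (w i) * B (w i) * R := this
    have h3 : B z * B z ≤ B (w i) * B (w i) := le_of_mul_le_mul_right h2 hRpos
    by_contra hlt
    push_neg at hlt
    nlinarith [mul_self_lt_mul_self (hBnonneg (w i)) hlt]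
  calc chebInf K n ≤ supNormOn K p := chebInf_le hK hKne hmonic hdeg
    _ ≤ B (w i) := supNormOn_le hKne fun z hz => by rw [heval z]; exact hBle z hz
    _ = a i := hBwi
    _ ≤ deltaN K m ^ n := hi

end ineqA
section ineqB
variable {K : Set ℝ}

lemma det_eval_eq (n : ℕ) (q : Fin n → Polynomial ℝ) (hmon : ∀ j, (q j).Monic)
    (hdeg : ∀ j, (q j).natDegree = (j : ℕ)) (x : Fin n → ℝ) :
    Matrix.det (Matrix.of fun i j => (q j).eval (x i)) = ∏ i, ∏ j ∈ Ioi i, (x j - x i) := by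
  classical
  set Cm : Matrix (Fin n) (Fin n) ℝ := Matrix.of fun j k => (q k).coeff j with hCm
  have hmul : (Matrix.of fun i j => (q j).eval (x i)) = Matrix.vandermonde x * Cm := by
    ext i k
    rw [Matrix.mul_apply]
    simp only [Matrix.vandermonde, Matrix.of_apply, hCm]
    rw [eval_eq_sum_range' (lt_of_le_of_lt (hdeg k).le k.isLt) (x i),
      ← Fin.sum_univ_eq_sum_range (fun j => (q k).coeff j * x i ^ j) n]
    exact Finset.sum_congr rfl fun j _ => mul_comm _ _
  have ht : Cm.BlockTriangular id := by
    intro a b hab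
    simp only [hCm, Matrix.of_apply]
    exact Polynomial.coeff_eq_zero_of_natDegree_lt (by rw [hdeg b]; exact_mod_cast hab)
  have hdetC : Cm.det = 1 := by
    rw [Matrix.det_of_upperTriangular ht]
    refine Finset.prod_eq_one fun k _ => ?_
    have := hmon k
    rw [Monic, leadingCoeff, hdeg k] at this
    exact this
  rw [hmul, Matrix.det_mul, Matrix.det_vandermonde, hdetC, mul_one]

lemma abs_det_le (hK : IsCompact K) (n : ℕ) (q : Fin n → Polynomial ℝ)
    (x : Fin n → ℝ) (hx : ∀ i, x i ∈ K) :
    |Matrix.det (Matrix.of fun i j => (q j).eval (x i))| ≤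
      (n.factorial : ℝ) * ∏ j, supNormOn K (q j) := by
  classical
  rw [Matrix.det_apply]
  refine le_trans (Finset.abs_sum_le_sum_abs _ _) ?_
  have hterm : ∀ σ : Equiv.Perm (Fin n),
      |Equiv.Perm.sign σ • ∏ i, (Matrix.of fun i j => (q j).eval (x i)) (σ i) i|
        ≤ ∏ j, supNormOn K (q j) := by
    intro σ
    have habs : |Equiv.Perm.sign σ • ∏ i, (Matrix.of fun i j => (q j).eval (x i)) (σ i) i|
        = |∏ i, (Matrix.of fun i j => (q j).eval (x i)) (σ i) i| := by
      rcases Int.units_eq_one_or (Equiv.Perm.sign σ) with h | h <;> simp [h]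
    rw [habs, abs_prod]
    refine Finset.prod_le_prod (fun i _ => abs_nonneg _) fun i _ => ?_
    exact le_supNormOn hK (q i) (hx (σ i))
  calc (∑ σ : Equiv.Perm (Fin n),
        |Equiv.Perm.sign σ • ∏ i, (Matrix.of fun i j => (q j).eval (x i)) (σ i) i|)
      ≤ ∑ _σ : Equiv.Perm (Fin n), ∏ j, supNormOn K (q j) :=
        Finset.sum_le_sum fun σ _ => hterm σ
    _ = (n.factorial : ℝ) * ∏ j, supNormOn K (q j) := by
        rw [Finset.sum_const, card_univ, Fintype.card_perm, Fintype.card_fin, nsmul_eq_mul]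

lemma Fprod_eq_sq (n : ℕ) (x : Fin n → ℝ) :
    Fprod n x = (∏ i, ∏ j ∈ Ioi i, |x j - x i|) * ∏ i, ∏ j ∈ Ioi i, |x j - x i| := by
  classical
  rw [Fprod, ← prod_filter_mul_prod_filter_not ((univ : Finset (Fin n)).offDiag)
    (fun p => p.1 < p.2) (fun p => |x p.1 - x p.2|)]
  have hA : (∏ p ∈ (univ : Finset (Fin n)).offDiag.filter (fun p => p.1 < p.2),
      |x p.1 - x p.2|) = ∏ i, ∏ j ∈ Ioi i, |x j - x i| := by
    have e : (univ : Finset (Fin n)).offDiag.filter (fun p => p.1 < p.2)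
        = (univ ×ˢ univ).filter (fun p => p.1 < p.2) := by
      ext ⟨a, b⟩
      simp only [mem_filter, Finset.mem_offDiag, mem_product, mem_univ, true_and]
      aesop
    rw [e, prod_filter, prod_product]
    refine prod_congr rfl fun i _ => ?_
    rw [← prod_filter]
    have e2 : (univ : Finset (Fin n)).filter (fun j => i < j) = Ioi i := by
      ext j; simp
    rw [e2]
    exact prod_congr rfl fun j _ => abs_sub_comm _ _
  have hB : (∏ p ∈ (univ : Finset (Fin n)).offDiag.filter (fun p => ¬p.1 < p.2),
      |x p.1 - x p.2|) = ∏ p ∈ (univ : Finset (Fin n)).offDiag.filter (fun p => p.1 < p.2),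
      |x p.1 - x p.2| := by
    refine prod_bij' (fun p _ => Prod.swap p) (fun p _ => Prod.swap p) ?_ ?_ ?_ ?_ ?_
    · rintro ⟨a, b⟩ hp
      simp only [mem_filter, Finset.mem_offDiag, mem_univ, true_and, Prod.swap_prod_mk,
        Prod.fst_swap, Prod.snd_swap] at hp ⊢
      obtain ⟨hne, hnlt⟩ := hp
      refine ⟨?_, ?_⟩
      · omega
      · omega
    · rintro ⟨a, b⟩ hp
      simp only [mem_filter, Finset.mem_offDiag, mem_univ, true_and, Prod.swap_prod_mk,
        Prod.fst_swap, Prod.snd_swap] at hp ⊢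
      obtain ⟨hne, hlt⟩ := hp
      refine ⟨?_, ?_⟩
      · omega
      · omega
    · rintro ⟨a, b⟩ _; rfl
    · rintro ⟨a, b⟩ _; rfl
    · rintro ⟨a, b⟩ _; exact abs_sub_comm _ _
  rw [hA, hB, hA]

lemma deltaN_le_factorial_bound (hK : IsCompact K) (hKne : K.Nonempty) (n : ℕ)
    (q : Fin n → Polynomial ℝ) (hmon : ∀ j, (q j).Monic)
    (hdeg : ∀ j, (q j).natDegree = (j : ℕ)) :
    deltaN K n ≤ (((n.factorial : ℝ) * ∏ j, supNormOn K (q j)) ^ 2) ^ capExp n := by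
  refine deltaN_le hKne (sq_nonneg _) fun x hx => ?_
  have h1 : (∏ i, ∏ j ∈ Ioi i, |x j - x i|)
      = |Matrix.det (Matrix.of fun i j => (q j).eval (x i))| := by
    rw [det_eval_eq n q hmon hdeg x, abs_prod]
    exact prod_congr rfl fun i _ => (abs_prod _ _).symm
  have h2 := abs_det_le hK n q x hx
  rw [Fprod_eq_sq, h1, sq]
  have h3 : (0 : ℝ) ≤ |Matrix.det (Matrix.of fun i j => (q j).eval (x i))| := abs_nonneg _
  exact mul_le_mul h2 h2 h3 (le_trans h3 h2)

end ineqB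
section analytic

lemma tendsto_capExp : Tendsto (fun n : ℕ => capExp n) atTop (nhds 0) := by
  have h : Tendsto (fun n : ℕ => (n : ℝ) * ((n : ℝ) - 1)) atTop atTop :=
    tendsto_natCast_atTop_atTop.atTop_mul_atTop₀
      (tendsto_atTop_add_const_right atTop (-1) tendsto_natCast_atTop_atTop)
  exact h.inv_tendsto_atTop

lemma gaussR (k : ℕ) : ((∑ j ∈ range k, j : ℕ) : ℝ) * 2 = (k : ℝ) * ((k : ℝ) - 1) := by
  cases k with
  | zero => simp
  | succ k =>
    have h := Finset.sum_range_id_mul_two (k + 1)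
    have h2 : ((∑ j ∈ range (k+1), j : ℕ) : ℝ) * 2 = ((k+1 : ℕ) : ℝ) * ((k : ℕ) : ℝ) := by
      exact_mod_cast congrArg (Nat.cast : ℕ → ℝ) h
    rw [h2]; push_cast; ring

set_option maxHeartbeats 1000000 in
lemma tendsto_log_div_sub_one :
    Tendsto (fun n : ℕ => Real.log n / ((n : ℝ) - 1)) atTop (nhds 0) := by
  have h0 : Tendsto (fun x : ℝ => Real.log x / x) atTop (nhds 0) :=
    Real.isLittleO_log_id_atTop.tendsto_div_nhds_zero
  have h1 : Tendsto (fun n : ℕ => Real.log n / n) atTop (nhds 0) :=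
    h0.comp tendsto_natCast_atTop_atTop
  have h2 : Tendsto (fun n : ℕ => ((n : ℝ) - 1)⁻¹) atTop (nhds 0) :=
    (tendsto_atTop_add_const_right atTop (-1) tendsto_natCast_atTop_atTop).inv_tendsto_atTop
  have h3 : Tendsto (fun n : ℕ => (n : ℝ) / ((n : ℝ) - 1)) atTop (nhds 1) := by
    have : Tendsto (fun n : ℕ => 1 + ((n : ℝ) - 1)⁻¹) atTop (nhds (1 + 0)) :=
      tendsto_const_nhds.add h2
    rw [add_zero] at this
    refine this.congr' ?_
    filter_upwards [eventually_ge_atTop 2] with n hn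
    have hne : (n : ℝ) - 1 ≠ 0 := by
      have : (2 : ℝ) ≤ (n : ℝ) := by exact_mod_cast hn
      linarith
    field_simp
    ring
  have h4 : Tendsto (fun n : ℕ => Real.log n / n * ((n : ℝ) / ((n : ℝ) - 1))) atTop
      (nhds (0 * 1)) := h1.mul h3
  rw [zero_mul] at h4
  refine h4.congr' ?_
  filter_upwards [eventually_ge_atTop 2] with n hn
  have hn0 : (n : ℝ) ≠ 0 := by positivity
  field_simp

lemma tendsto_logfact_mul_capExp :
    Tendsto (fun n : ℕ => Real.log n.factorial * capExp n) atTop (nhds 0) := by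
  have hub : ∀ᶠ n : ℕ in atTop,
      Real.log n.factorial * capExp n ≤ Real.log n / ((n : ℝ) - 1) := by
    filter_upwards [eventually_ge_atTop 2] with n hn
    have hn2 : (2 : ℝ) ≤ (n : ℝ) := by exact_mod_cast hn
    have hfact : Real.log n.factorial ≤ (n : ℝ) * Real.log n := by
      have h1 : (0 : ℝ) < n.factorial := by exact_mod_cast n.factorial_pos
      have h2 : (n.factorial : ℝ) ≤ (n : ℝ) ^ n := by exact_mod_cast Nat.factorial_le_pow n
      calc Real.log n.factorial ≤ Real.log ((n : ℝ) ^ n) := Real.log_le_log h1 h2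
        _ = (n : ℝ) * Real.log n := by rw [Real.log_pow]
    have hcap : capExp n = ((n : ℝ) * ((n : ℝ) - 1))⁻¹ := rfl
    have hpos : (0 : ℝ) < (n : ℝ) * ((n : ℝ) - 1) := by nlinarith
    calc Real.log n.factorial * capExp n ≤ ((n : ℝ) * Real.log n) * capExp n := by
          apply mul_le_mul_of_nonneg_right hfact (capExp_nonneg n)
      _ = Real.log n / ((n : ℝ) - 1) := by
          rw [hcap]
          have hne : (n : ℝ) - 1 ≠ 0 := by linarith
          have hn0 : (n : ℝ) ≠ 0 := by linarith
          field_simp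
  have hlb : ∀ᶠ n : ℕ in atTop, (0 : ℝ) ≤ Real.log n.factorial * capExp n := by
    filter_upwards [eventually_ge_atTop 1] with n hn
    apply mul_nonneg _ (capExp_nonneg n)
    apply Real.log_nonneg
    exact_mod_cast Nat.one_le_iff_ne_zero.2 n.factorial_ne_zero
  exact tendsto_of_tendsto_of_tendsto_of_le_of_le' tendsto_const_nhds
    tendsto_log_div_sub_one hlb hub

end analytic

/-- The limit of `m_n(K)^(1/n)` equals the limit of `δ_n(K)`: the two definitions of the
logarithmic capacity (transfinite diameter) of `K` coincide. -/
theorem cap_eq_transfinite_diameter (K : Set ℝ) (hK : IsCompact K) (hKinf : K.Infinite)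
    (c d : ℝ)
    (hc : Tendsto (fun n : ℕ => chebInf K n ^ ((n : ℝ)⁻¹)) atTop (nhds c))
    (hd : Tendsto (fun n : ℕ => deltaN K n) atTop (nhds d)) :
    c = d := by
  have hKne : K.Nonempty := hKinf.nonempty
  have hc0 : 0 ≤ c := ge_of_tendsto hc (Eventually.of_forall fun n =>
    Real.rpow_nonneg (chebInf_nonneg hK hKne n) _)
  have hcd : c ≤ d := by
    have hd' : Tendsto (fun n : ℕ => deltaN K (n + 1)) atTop (nhds d) :=
      hd.comp (tendsto_add_atTop_nat 1)
    refine le_of_tendsto_of_tendsto hc hd' ?_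
    filter_upwards [eventually_ge_atTop 1] with n hn
    have hA := chebInf_le_deltaN_pow hK hKinf hn
    have hδ0 : (0:ℝ) ≤ deltaN K (n+1) := (deltaN_pos hK hKinf (n+1)).le
    have hncast : ((n : ℝ)) ≠ 0 := by
      have : 0 < n := hn
      positivity
    calc chebInf K n ^ ((n:ℝ)⁻¹) ≤ (deltaN K (n+1) ^ n) ^ ((n:ℝ)⁻¹) :=
          Real.rpow_le_rpow (chebInf_nonneg hK hKne n) hA (by positivity)
      _ = deltaN K (n+1) := by
          rw [← Real.rpow_natCast (deltaN K (n+1)) n, ← Real.rpow_mul hδ0,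
            mul_inv_cancel₀ hncast, Real.rpow_one]
  refine le_antisymm hcd ?_
  refine le_of_forall_gt_imp_ge_of_dense fun t ht => ?_
  have ht0 : 0 < t := lt_of_le_of_lt hc0 ht
  obtain ⟨N, hN⟩ := eventually_atTop.1 ((hc.eventually_lt_const ht).and (eventually_ge_atTop 1))
  have hMj : ∀ j, N ≤ j → chebInf K j < t ^ j := by
    intro j hj
    obtain ⟨hlt, hj1⟩ := hN j hj
    have hM0 : 0 ≤ chebInf K j := chebInf_nonneg hK hKne j
    have hjcast : ((j : ℝ)) ≠ 0 := by
      have : 0 < j := hj1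
      positivity
    have hrw : chebInf K j = (chebInf K j ^ ((j:ℝ)⁻¹)) ^ j := by
      rw [← Real.rpow_natCast (chebInf K j ^ ((j:ℝ)⁻¹)) j, ← Real.rpow_mul hM0,
        inv_mul_cancel₀ hjcast, Real.rpow_one]
    rw [hrw]
    exact pow_lt_pow_left₀ hlt (Real.rpow_nonneg hM0 _) (by omega : j ≠ 0)
  have hchoice : ∀ j : ℕ, ∃ P : Polynomial ℝ, P.Monic ∧ P.natDegree = j ∧
      supNormOn K P ≤ (if j < N then supNormOn K (X ^ j) else t ^ j) := by
    intro j
    by_cases hj : j < N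
    · exact ⟨X ^ j, monic_X_pow j, natDegree_X_pow j, by rw [if_pos hj]⟩
    · obtain ⟨P, h1, h2, h3⟩ := exists_monic_lt (hMj j (le_of_not_gt hj))
      exact ⟨P, h1, h2, by rw [if_neg hj]; exact h3.le⟩
  choose f hf1 hf2 hf3 using hchoice
  set CN := ∏ j ∈ range N, supNormOn K (X ^ j) with hCN
  have hCNpos : 0 < CN := prod_pos fun j _ => supNormOn_pos hK hKinf (pow_ne_zero j X_ne_zero)
  have hprod_le : ∀ n, N ≤ n →
      (∏ j : Fin n, supNormOn K (f (j:ℕ))) ≤ CN * t ^ (∑ j ∈ Ico N n, j) := by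
    intro n hn
    rw [Fin.prod_univ_eq_prod_range (fun j => supNormOn K (f j)) n, Finset.range_eq_Ico,
      ← Finset.prod_Ico_consecutive _ (Nat.zero_le N) hn]
    have hA : ∏ j ∈ Ico 0 N, supNormOn K (f j) ≤ CN := by
      rw [hCN, Finset.range_eq_Ico]
      refine prod_le_prod (fun j _ => supNormOn_nonneg hK hKne _) fun j hj => ?_
      have h := hf3 j
      rw [if_pos (mem_Ico.1 hj).2] at h
      exact h
    have hB2 : ∏ j ∈ Ico N n, supNormOn K (f j) ≤ t ^ (∑ j ∈ Ico N n, j) := by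
      rw [← prod_pow_eq_pow_sum]
      refine prod_le_prod (fun j _ => supNormOn_nonneg hK hKne _) fun j hj => ?_
      have h := hf3 j
      rw [if_neg (not_lt.2 (mem_Ico.1 hj).1)] at h
      exact h
    exact mul_le_mul hA hB2 (prod_nonneg fun j _ => supNormOn_nonneg hK hKne _) hCNpos.le
  set S : ℕ → ℕ := fun n => ∑ j ∈ Ico N n, j with hS
  set g : ℕ → ℝ := fun n => (((n.factorial : ℝ) * (CN * t ^ S n)) ^ 2) ^ capExp n with hg
  have hbpos : ∀ n, (0:ℝ) < (n.factorial : ℝ) * (CN * t ^ S n) := by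
    intro n
    have h1 : (0:ℝ) < (n.factorial : ℝ) := by exact_mod_cast n.factorial_pos
    positivity
  have hδg : ∀ᶠ n in atTop, deltaN K n ≤ g n := by
    filter_upwards [eventually_ge_atTop N] with n hn
    have h1 := deltaN_le_factorial_bound hK hKne n (fun j : Fin n => f (j:ℕ))
      (fun j => hf1 (j:ℕ)) (fun j => hf2 (j:ℕ))
    refine le_trans h1 ?_
    refine Real.rpow_le_rpow (sq_nonneg _) ?_ (capExp_nonneg n)
    have hb1 : (0:ℝ) ≤ (n.factorial : ℝ) * ∏ j : Fin n, supNormOn K (f (j:ℕ)) := by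
      apply mul_nonneg (by positivity)
      exact prod_nonneg fun j _ => supNormOn_nonneg hK hKne _
    refine pow_le_pow_left₀ hb1 ?_ 2
    exact mul_le_mul_of_nonneg_left (hprod_le n hn) (by positivity)
  -- tendsto g → t
  set E : ℕ → ℝ := fun n => 2 * (Real.log n.factorial * capExp n) +
      (2 * Real.log CN) * capExp n + (2 * (S n : ℝ) * capExp n) * Real.log t with hE
  have hgE : ∀ n, g n = Real.exp (E n) := by
    intro n
    show (((n.factorial : ℝ) * (CN * t ^ S n)) ^ 2) ^ capExp n = Real.exp (E n)
    rw [Real.rpow_def_of_pos (pow_pos (hbpos n) 2)]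
    congr 1
    have hb := hbpos n
    have h1 : Real.log (((n.factorial : ℝ) * (CN * t ^ S n)) ^ 2)
        = 2 * Real.log ((n.factorial : ℝ) * (CN * t ^ S n)) := by
      rw [← Real.rpow_natCast _ 2, Real.log_rpow hb]
      norm_num
    have h2 : Real.log ((n.factorial : ℝ) * (CN * t ^ S n))
        = Real.log (n.factorial : ℝ) + Real.log CN + (S n : ℝ) * Real.log t := by
      have hfne : ((n.factorial : ℝ)) ≠ 0 := by
        have : (0:ℝ) < (n.factorial : ℝ) := by exact_mod_cast n.factorial_pos
        positivity
      have hCNne : CN ≠ 0 := hCNpos.ne'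
      have htne : t ^ S n ≠ 0 := by positivity
      rw [Real.log_mul hfne (by positivity), Real.log_mul hCNne htne, Real.log_pow]
      ring
    rw [h1, h2, hE]
    ring
  have hpart3 : Tendsto (fun n : ℕ => 2 * (S n : ℝ) * capExp n) atTop (nhds 1) := by
    have hlim : Tendsto (fun n : ℕ => 1 - ((N : ℝ) * ((N : ℝ) - 1)) * capExp n) atTop
        (nhds (1 - ((N : ℝ) * ((N : ℝ) - 1)) * 0)) :=
      tendsto_const_nhds.sub (tendsto_capExp.const_mul _)
    rw [mul_zero, sub_zero] at hlim
    refine hlim.congr' ?_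
    filter_upwards [eventually_ge_atTop (max N 2)] with n hn
    have hnN : N ≤ n := le_trans (le_max_left _ _) hn
    have hn2 : 2 ≤ n := le_trans (le_max_right _ _) hn
    have hn2R : (2:ℝ) ≤ (n:ℝ) := by exact_mod_cast hn2
    have hsum : (S n : ℝ) * 2 = (n:ℝ)*((n:ℝ)-1) - (N:ℝ)*((N:ℝ)-1) := by
      have h1 : (∑ j ∈ Ico 0 N, j) + (∑ j ∈ Ico N n, j) = ∑ j ∈ Ico 0 n, j :=
        Finset.sum_Ico_consecutive _ (Nat.zero_le N) hnN
      have h2 : (∑ j ∈ range N, j) + S n = ∑ j ∈ range n, j := by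
        show (∑ j ∈ range N, j) + (∑ j ∈ Ico N n, j) = ∑ j ∈ range n, j
        simp only [Finset.range_eq_Ico]
        exact h1
      have h3 : ((∑ j ∈ range N, j : ℕ) : ℝ) + ((S n : ℕ) : ℝ)
          = ((∑ j ∈ range n, j : ℕ) : ℝ) := by exact_mod_cast congrArg (Nat.cast : ℕ → ℝ) h2
      linarith [gaussR n, gaussR N]
    have hcapinv : ((n:ℝ)*((n:ℝ)-1)) * capExp n = 1 := by
      rw [capExp]
      apply mul_inv_cancel₀
      nlinarith
    have hrw : 2*(S n:ℝ)*capExp n = ((n:ℝ)*((n:ℝ)-1) - (N:ℝ)*((N:ℝ)-1)) * capExp n := by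
      rw [← hsum]; ring
    rw [hrw, sub_mul, hcapinv]
  have hEt : Tendsto E atTop (nhds (Real.log t)) := by
    have p1 : Tendsto (fun n : ℕ => 2 * (Real.log n.factorial * capExp n)) atTop
        (nhds (2*0)) := tendsto_logfact_mul_capExp.const_mul 2
    have p2 : Tendsto (fun n : ℕ => (2*Real.log CN) * capExp n) atTop
        (nhds ((2*Real.log CN)*0)) := tendsto_capExp.const_mul _
    have p3 : Tendsto (fun n : ℕ => (2*(S n:ℝ)*capExp n) * Real.log t) atTop
        (nhds (1 * Real.log t)) := hpart3.mul_const _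
    have hsumE := (p1.add p2).add p3
    rw [hE]
    simpa using hsumE
  have hgt : Tendsto g atTop (nhds t) := by
    have hcomp : Tendsto (fun n : ℕ => Real.exp (E n)) atTop
        (nhds (Real.exp (Real.log t))) := (Real.continuous_exp.tendsto _).comp hEt
    rw [Real.exp_log ht0] at hcomp
    exact hcomp.congr fun n => (hgE n).symm
  exact le_of_tendsto_of_tendsto hd hgt hδg
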